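/- Let Z be a nonzero real or complex Banach space which is lush, and let P : Z → Z be a linear M-projection (i.e. ‖z‖ = max{‖Pz‖, ‖z − Pz‖} for all z ∈ Z) with range X. Then the subspace X, equipped with the norm inherited from Z, is lush. -/

import Mathlib

open scoped BigOperators

/-- The open slice `S(B_X, f, α) = {x ∈ B_X : Re f(x) > 1 - α}` of the closed unit ball. -/
def Slice (𝕜 : Type*) {X : Type*} [RCLike 𝕜] [NormedAddCommGroup X] [NormedSpace 𝕜 X]
    (f : X →L[𝕜] 𝕜) (α : ℝ) : Set X :=
  {x | ‖x‖ ≤ 1 ∧ 1 - α < RCLike.re (f x)}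

/-- The convex hull of `𝕋 · S(B_X, f, α)`, i.e. all convex combinations of rotated points of
the slice `S(B_X, f, α)`. -/
def ConvRotSlice (𝕜 : Type*) {X : Type*} [RCLike 𝕜] [NormedAddCommGroup X] [NormedSpace 𝕜 X]
    (f : X →L[𝕜] 𝕜) (α : ℝ) : Set X :=
  {x | ∃ (n : ℕ) (t : Fin n → ℝ) (ω : Fin n → 𝕜) (s : Fin n → X),
    (∀ k, 0 ≤ t k) ∧ (∑ k, t k) = 1 ∧ (∀ k, ‖ω k‖ = 1) ∧ (∀ k, s k ∈ Slice 𝕜 f α) ∧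
    x = ∑ k, ((t k : 𝕜) * ω k) • s k}

/-- A Banach space `X` over `𝕜 = ℝ` or `ℂ` is *lush* if for all `u, v` in the unit sphere and
every `ε > 0` there is a norm-one functional `f` with `u ∈ S(B_X, f, ε)` and
`dist(v, conv(𝕋 · S(B_X, f, ε))) < ε`. -/
def IsLush (𝕜 X : Type*) [RCLike 𝕜] [NormedAddCommGroup X] [NormedSpace 𝕜 X] : Prop :=
  ∀ u v : X, ‖u‖ = 1 → ‖v‖ = 1 → ∀ ε : ℝ, 0 < ε →
    ∃ f : X →L[𝕜] 𝕜, ‖f‖ = 1 ∧ u ∈ Slice 𝕜 f ε ∧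
      Metric.infDist v (ConvRotSlice 𝕜 f ε) < ε

/-- For any scalar `z` there is a unimodular `ω` with `ω * z = ‖z‖`. -/
lemma exists_phase_mul {𝕜 : Type*} [RCLike 𝕜] (z : 𝕜) :
    ∃ ω : 𝕜, ‖ω‖ = 1 ∧ ω * z = (‖z‖ : 𝕜) := by
  rcases eq_or_ne z 0 with rfl | hz
  · exact ⟨1, norm_one, by simp⟩
  · refine ⟨(‖z‖ : 𝕜) / z, ?_, ?_⟩
    · rw [norm_div, RCLike.norm_ofReal, abs_of_nonneg (norm_nonneg z),
        div_self (norm_ne_zero_iff.2 hz)]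
    · field_simp

set_option maxHeartbeats 1000000 in
/-- An M-summand of a lush space is lush. -/
theorem isLush_of_mSummand {𝕜 Z : Type*} [RCLike 𝕜] [NormedAddCommGroup Z] [NormedSpace 𝕜 Z]
    [CompleteSpace Z] [Nontrivial Z] (hZ : IsLush 𝕜 Z)
    (P : Z →L[𝕜] Z) (hproj : ∀ z, P (P z) = P z)
    (hM : ∀ z, ‖z‖ = max ‖P z‖ ‖z - P z‖)
    (X : Submodule 𝕜 Z) (hX : ∀ z, z ∈ X ↔ ∃ w, P w = z) :
    IsLush 𝕜 X := by
  intro u v hu hv ε hε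
  have hPle : ∀ z : Z, ‖P z‖ ≤ ‖z‖ := fun z => (hM z) ▸ le_max_left _ _
  have hQle : ∀ z : Z, ‖z - P z‖ ≤ ‖z‖ := fun z => (hM z) ▸ le_max_right _ _
  have hPfix : ∀ z ∈ X, P z = z := by
    intro z hz; obtain ⟨w, rfl⟩ := (hX z).1 hz; exact hproj w
  have hPmem : ∀ z : Z, P z ∈ X := fun z => (hX (P z)).2 ⟨z, rfl⟩
  set δ : ℝ := min ε 1 / 3 with hδdef
  have hmε : min ε 1 ≤ ε := min_le_left _ _
  have hm1 : min ε 1 ≤ 1 := min_le_right _ _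
  have hδ0 : 0 < δ := div_pos (lt_min hε one_pos) (by norm_num)
  have hδε3 : δ ≤ ε / 3 := div_le_div_of_nonneg_right hmε (by norm_num)
  have hδε : δ < ε := by linarith
  have h2δε : 2 * δ ≤ ε := by linarith
  have h2δ1 : 2 * δ < 1 := by
    have : δ ≤ 1 / 3 := div_le_div_of_nonneg_right hm1 (by norm_num)
    linarith
  -- apply lushness of Z to u, v with parameter δ
  obtain ⟨f, hf, ⟨hu1, hu2⟩, hdist⟩ := hZ (u : Z) (v : Z) hu hv δ hδ0
  have hfu_pos : (0:ℝ) < RCLike.re (f (u : Z)) := by linarith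
  -- key estimate: for s in the slice of B_Z, P s is almost in the slice as well
  have key : ∀ s : Z, s ∈ Slice 𝕜 f δ → 1 - 2 * δ < RCLike.re (f (P s)) := by
    intro s hs
    obtain ⟨hs1, hs2⟩ := hs
    set w : Z := s - P s with hw
    have hwle : ‖w‖ ≤ 1 := (hQle s).trans hs1
    obtain ⟨ω, hω1, hω2⟩ := exists_phase_mul (𝕜 := 𝕜) (f w)
    have hPw : P w = 0 := by simp [hw, map_sub, hproj]
    have hz : ‖(u : Z) + ω • w‖ ≤ 1 := by
      rw [hM ((u : Z) + ω • w)]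
      have h1 : P ((u : Z) + ω • w) = (u : Z) := by
        rw [map_add, map_smul, hPw, smul_zero, add_zero, hPfix _ u.2]
      rw [h1]
      have h2 : (u : Z) + ω • w - (u : Z) = ω • w := by abel
      rw [h2, norm_smul, hω1, one_mul]
      exact max_le (le_of_eq hu) hwle
    have hre : RCLike.re (f ((u : Z) + ω • w)) ≤ 1 := by
      calc RCLike.re (f ((u : Z) + ω • w)) ≤ ‖f ((u : Z) + ω • w)‖ := RCLike.re_le_norm _
        _ ≤ ‖f‖ * ‖(u : Z) + ω • w‖ := f.le_opNorm _
        _ ≤ 1 := by rw [hf, one_mul]; exact hz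
    have hsum : RCLike.re (f ((u : Z) + ω • w))
        = RCLike.re (f (u : Z)) + ‖f w‖ := by
      rw [map_add, map_smul, map_add, smul_eq_mul, hω2]
      simp [RCLike.ofReal_re]
    have hfw : ‖f w‖ ≤ 1 - RCLike.re (f (u : Z)) := by
      rw [hsum] at hre; linarith
    have hfsw : RCLike.re (f (P s)) = RCLike.re (f s) - RCLike.re (f w) := by
      have h3 : f (P s) = f s - f w := by rw [hw, map_sub]; ring
      rw [h3, map_sub]
    have h4 : RCLike.re (f w) ≤ ‖f w‖ := RCLike.re_le_norm _
    have habs : RCLike.re (f w) < δ := by linarith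
    linarith
  -- the normalized restriction of f to X
  set F : X →L[𝕜] 𝕜 := f.comp X.subtypeL with hF
  set c : ℝ := ‖F‖ with hc
  have hFapp : ∀ x : X, F x = f (x : Z) := fun x => rfl
  have hcle : c ≤ 1 := by
    apply ContinuousLinearMap.opNorm_le_bound _ zero_le_one
    intro x
    calc ‖F x‖ = ‖f (x : Z)‖ := rfl
      _ ≤ ‖f‖ * ‖(x : Z)‖ := f.le_opNorm _
      _ = 1 * ‖x‖ := by rw [hf]; rfl
  have hcge : RCLike.re (f (u : Z)) ≤ c := by
    calc RCLike.re (f (u : Z)) ≤ ‖f (u : Z)‖ := RCLike.re_le_norm _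
      _ = ‖F u‖ := rfl
      _ ≤ c * ‖u‖ := F.le_opNorm _
      _ = c := by rw [hu, mul_one]
  have hc0 : 0 < c := lt_of_lt_of_le hfu_pos hcge
  have hcinv : 1 ≤ c⁻¹ := one_le_inv_iff₀.2 ⟨hc0, hcle⟩
  set g : X →L[𝕜] 𝕜 := ((c⁻¹ : ℝ) : 𝕜) • F with hg
  have hgnorm : ‖g‖ = 1 := by
    have hgle : ‖g‖ ≤ 1 := by
      apply ContinuousLinearMap.opNorm_le_bound _ zero_le_one
      intro x
      rw [hg, ContinuousLinearMap.smul_apply, norm_smul, RCLike.norm_ofReal,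
        abs_of_nonneg (by positivity), one_mul]
      calc c⁻¹ * ‖F x‖ ≤ c⁻¹ * (c * ‖x‖) :=
            mul_le_mul_of_nonneg_left (F.le_opNorm x) (by positivity)
        _ = ‖x‖ := by field_simp
    have hgge : 1 ≤ ‖g‖ := by
      have hFle : c ≤ c * ‖g‖ := by
        rw [hc]
        apply ContinuousLinearMap.opNorm_le_bound _ (by positivity)
        intro x
        have hFx : F x = ((c : ℝ) : 𝕜) • g x := by
          rw [hg, ContinuousLinearMap.smul_apply, smul_smul, ← RCLike.ofReal_mul,
            mul_inv_cancel₀ (ne_of_gt hc0)]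
          simp
        rw [hFx, norm_smul, RCLike.norm_ofReal, abs_of_nonneg hc0.le, mul_assoc]
        exact mul_le_mul_of_nonneg_left (g.le_opNorm x) hc0.le
      exact (mul_le_mul_iff_right₀ hc0).1 (by simpa using hFle)
    exact le_antisymm hgle hgge
  have hgre : ∀ x : X, RCLike.re (g x) = c⁻¹ * RCLike.re (f (x : Z)) := by
    intro x
    rw [hg]
    simp only [ContinuousLinearMap.smul_apply, smul_eq_mul, RCLike.re_ofReal_mul]
    rw [hFapp]
  refine ⟨g, hgnorm, ⟨le_of_eq hu, ?_⟩, ?_⟩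
  · -- u lies in the slice of g
    rw [hgre]
    have : RCLike.re (f (u : Z)) ≤ c⁻¹ * RCLike.re (f (u : Z)) :=
      le_mul_of_one_le_left (le_of_lt hfu_pos) hcinv
    linarith
  · -- the distance estimate
    have hne : (ConvRotSlice 𝕜 f δ).Nonempty := by
      refine ⟨(u : Z), 1, fun _ => 1, fun _ => 1, fun _ => (u : Z), fun _ => zero_le_one,
        by simp, fun _ => norm_one, fun _ => ⟨hu1, hu2⟩, by simp⟩
    obtain ⟨y, hyS, hy⟩ := (Metric.infDist_lt_iff hne).1 hdist
    obtain ⟨n, t, ω, s, ht0, ht1, hω, hsS, hyeq⟩ := hyS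
    set sX : Fin n → X := fun k => ⟨P (s k), hPmem _⟩ with hsX
    set Y : X := ∑ k, ((t k : 𝕜) * ω k) • sX k with hY
    have hmemY : Y ∈ ConvRotSlice 𝕜 g ε := by
      refine ⟨n, t, ω, sX, ht0, ht1, hω, fun k => ⟨?_, ?_⟩, rfl⟩
      · show ‖P (s k)‖ ≤ 1
        exact (hPle _).trans (hsS k).1
      · rw [hgre]
        have h5 : 1 - 2 * δ < RCLike.re (f (P (s k))) := key _ (hsS k)
        have h6 : RCLike.re (f ((sX k : Z))) = RCLike.re (f (P (s k))) := rfl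
        have h7 : RCLike.re (f (P (s k))) ≤ c⁻¹ * RCLike.re (f (P (s k))) :=
          le_mul_of_one_le_left (by linarith) hcinv
        rw [h6] at *
        linarith
    have hYcoe : (Y : Z) = P y := by
      rw [hY, hyeq, map_sum]
      push_cast
      exact Finset.sum_congr rfl fun k _ => by rw [map_smul]
    calc Metric.infDist v (ConvRotSlice 𝕜 g ε) ≤ dist v Y :=
          Metric.infDist_le_dist_of_mem hmemY
      _ = ‖(v : Z) - P y‖ := by rw [dist_eq_norm, ← hYcoe]; rfl
      _ = ‖P ((v : Z) - y)‖ := by rw [map_sub, hPfix _ v.2]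
      _ ≤ ‖(v : Z) - y‖ := hPle _
      _ = dist (v : Z) y := (dist_eq_norm _ _).symm
      _ < δ := hy
      _ < ε := hδε
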